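/- arXiv:2103.01503 — 6 statements merged into one kernel-verified Lean document; each statement's English description precedes it below -/
import Mathlib

section
/- Let 1 ≤ k ≤ n be integers and μ > 0 a real. Let p : {1,…,n} → [0,1] satisfy p(i) = 1 for all i with n−k < i ≤ n. Then 1/k + (1/(μk)) ∫₀¹ (1/ε) · (Σ_{i=1}^{n} C(n,i) ε^i (1−ε)^{n−i} p(i)) dε = (1/k)·(1 + (1/μ) Σ_{i=n−k+1}^{n} 1/i) + (1/(μk)) Σ_{i=1}^{n−k} p(i)/i, where C(n,i) denotes the binomial coefficient. -/
lemma betaR (a b : ℕ) :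
    ∫ x in (0:ℝ)..1, x ^ a * (1 - x) ^ b
      = (a.factorial * b.factorial : ℝ) / ((a + b + 1).factorial) := by
  have hprod : (a.factorial : ℂ) * ∏ j ∈ Finset.range (b + 1), ((a : ℂ) + 1 + j)
      = ((a + b + 1).factorial : ℂ) := by
    induction b with
    | zero =>
      simp [Nat.factorial_succ]
      ring
    | succ b ih =>
      rw [Finset.prod_range_succ, ← mul_assoc, ih]
      have h2 : (a + (b + 1) + 1).factorial = ((a + b + 1) + 1) * (a + b + 1).factorial := by
        rw [← Nat.factorial_succ]; congr 1
      rw [h2, Nat.cast_mul]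
      push_cast
      ring
  have h := Complex.betaIntegral_eval_nat_add_one_right (u := (a + 1 : ℂ)) (by simp; positivity) b
  rw [Complex.betaIntegral] at h
  have hint : (∫ x in (0:ℝ)..1, (x : ℂ) ^ ((a:ℂ) + 1 - 1) * (1 - (x:ℂ)) ^ ((b:ℂ) + 1 - 1))
      = ((∫ x in (0:ℝ)..1, x ^ a * (1 - x) ^ b : ℝ) : ℂ) := by
    rw [← intervalIntegral.integral_ofReal]
    apply intervalIntegral.integral_congr
    intro x _
    simp only [add_sub_cancel_right]
    rw [Complex.cpow_natCast, Complex.cpow_natCast]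
    push_cast
    ring
  rw [hint] at h
  have hfac : ((a + b + 1).factorial : ℂ) ≠ 0 := by
    exact_mod_cast Nat.factorial_ne_zero _
  have hafac : (a.factorial : ℂ) ≠ 0 := by exact_mod_cast Nat.factorial_ne_zero _
  have hprodne : (∏ j ∈ Finset.range (b + 1), ((a : ℂ) + 1 + j)) ≠ 0 := by
    intro h0
    rw [h0, mul_zero] at hprod
    exact hfac hprod.symm
  have : ((∫ x in (0:ℝ)..1, x ^ a * (1 - x) ^ b : ℝ) : ℂ)
      = ((a.factorial * b.factorial : ℝ) / ((a + b + 1).factorial) : ℝ) := by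
    rw [h]
    push_cast
    rw [← hprod]
    field_simp
  exact_mod_cast this

/-- `C(n,i) * ∫ ε^{i-1}(1-ε)^{n-i} = 1/i` for `1 ≤ i ≤ n`. -/
lemma key_int (n i : ℕ) (h1 : 1 ≤ i) (h2 : i ≤ n) :
    (n.choose i : ℝ) * ∫ x in (0:ℝ)..1, x ^ (i - 1) * (1 - x) ^ (n - i)
      = 1 / i := by
  rw [betaR]
  have hn : (i - 1) + (n - i) + 1 = n := by omega
  rw [hn]
  have hch : (n.choose i) * i.factorial * (n - i).factorial = n.factorial :=
    Nat.choose_mul_factorial_mul_factorial h2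
  have hi : i.factorial = i * (i - 1).factorial := by
    conv_lhs => rw [show i = (i - 1) + 1 by omega]
    rw [Nat.factorial_succ]
    congr 1; omega
  have hiR : (0:ℝ) < i := by exact_mod_cast h1
  have hchR : (n.choose i : ℝ) * (i * (i-1).factorial) * (n - i).factorial = n.factorial := by
    exact_mod_cast hi ▸ hch
  have hnfac : (n.factorial : ℝ) ≠ 0 := by exact_mod_cast Nat.factorial_ne_zero _
  field_simp
  nlinarith [hchR]

/-- For `1 ≤ k ≤ n`, `μ > 0`, and a conditional-failure profile `p : {1,…,n} → [0,1]`
with `p(i) = 1` for `n−k < i ≤ n`: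
`1/k + (1/(μk)) ∫₀¹ (1/ε)·(Σ_{i=1}^{n} C(n,i) ε^i (1−ε)^{n−i} p(i)) dε
  = (1/k)·(1 + (1/μ) Σ_{i=n−k+1}^{n} 1/i) + (1/(μk)) Σ_{i=1}^{n−k} p(i)/i`. -/
theorem stmt1 (n k : ℕ) (hk : 1 ≤ k) (hkn : k ≤ n) (μ : ℝ) (hμ : 0 < μ)
    (p : ℕ → ℝ) (hp : ∀ i, 1 ≤ i → i ≤ n → p i ∈ Set.Icc (0:ℝ) 1)
    (hp1 : ∀ i, n - k < i → i ≤ n → p i = 1) :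
    1 / (k : ℝ)
      + (1 / (μ * k)) * ∫ ε in (0:ℝ)..1,
          (1 / ε) * ∑ i ∈ Finset.Icc 1 n, (n.choose i : ℝ) * ε ^ i * (1 - ε) ^ (n - i) * p i
    = (1 / (k : ℝ)) * (1 + (1 / μ) * ∑ i ∈ Finset.Icc (n - k + 1) n, (1 : ℝ) / i)
      + (1 / (μ * k)) * ∑ i ∈ Finset.Icc 1 (n - k), p i / i := by
  have hI : (∫ ε in (0:ℝ)..1,
        (1 / ε) * ∑ i ∈ Finset.Icc 1 n, (n.choose i : ℝ) * ε ^ i * (1 - ε) ^ (n - i) * p i)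
      = ∑ i ∈ Finset.Icc 1 n, p i / i := by
    have hcong : (∫ ε in (0:ℝ)..1,
          (1 / ε) * ∑ i ∈ Finset.Icc 1 n, (n.choose i : ℝ) * ε ^ i * (1 - ε) ^ (n - i) * p i)
        = ∫ ε in (0:ℝ)..1,
          ∑ i ∈ Finset.Icc 1 n, ((n.choose i : ℝ) * p i) * (ε ^ (i - 1) * (1 - ε) ^ (n - i)) := by
      apply intervalIntegral.integral_congr_ae
      filter_upwards with ε hε
      rw [Set.uIoc_of_le (zero_le_one' ℝ)] at hε
      have hε0 : ε ≠ 0 := ne_of_gt hε.1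
      rw [Finset.mul_sum]
      apply Finset.sum_congr rfl
      intro i hi
      have hi1 : 1 ≤ i := (Finset.mem_Icc.mp hi).1
      have : ε ^ i = ε * ε ^ (i - 1) := by
        rw [← pow_succ']
        congr 1; omega
      rw [this]
      field_simp
    rw [hcong, intervalIntegral.integral_finset_sum]
    · apply Finset.sum_congr rfl
      intro i hi
      obtain ⟨hi1, hi2⟩ := Finset.mem_Icc.mp hi
      rw [intervalIntegral.integral_const_mul]
      have := key_int n i hi1 hi2
      calc (n.choose i : ℝ) * p i * ∫ x in (0:ℝ)..1, x ^ (i-1) * (1-x) ^ (n-i)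
          = p i * ((n.choose i : ℝ) * ∫ x in (0:ℝ)..1, x ^ (i-1) * (1-x) ^ (n-i)) := by ring
        _ = p i * (1 / i) := by rw [this]
        _ = p i / i := by ring
    · intro i _
      exact (Continuous.intervalIntegrable (by fun_prop) 0 1)
  rw [hI]
  have hsplit : (∑ i ∈ Finset.Icc 1 n, p i / i)
      = (∑ i ∈ Finset.Icc 1 (n - k), p i / i) + ∑ i ∈ Finset.Icc (n - k + 1) n, (1:ℝ) / i := by
    have h1 : Finset.Icc 1 n = Finset.Ioc 0 n := by rw [← Finset.Icc_add_one_left_eq_Ioc]; rfl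
    have h2 : Finset.Icc 1 (n - k) = Finset.Ioc 0 (n - k) := by rw [← Finset.Icc_add_one_left_eq_Ioc]; rfl
    have h3 : Finset.Icc (n - k + 1) n = Finset.Ioc (n - k) n := by rw [← Finset.Icc_add_one_left_eq_Ioc]
    rw [h1, h2, h3, ← Finset.sum_Ioc_consecutive _ (Nat.zero_le (n - k)) (Nat.sub_le n k)]
    congr 1
    apply Finset.sum_congr rfl
    intro i hi
    obtain ⟨hi1, hi2⟩ := Finset.mem_Ioc.mp hi
    rw [hp1 i hi1 hi2]
  rw [hsplit]
  have hk0 : (k : ℝ) ≠ 0 := by positivity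
  field_simp
  ring
end

section
/- Let V be a linear subspace of ℝⁿ of dimension d. Then the number of vectors in {−1,1}ⁿ that lie in V is at most 2^d; equivalently, if r is chosen uniformly at random from {−1,1}ⁿ, then Pr(r ∈ V) ≤ 2^{−(n−d)} = 2^{−dim(V^⊥)}. -/
open Classical in
/-- If `V` is a `d`-dimensional linear subspace of `ℝⁿ`, then the number of vectors in
`{−1,1}ⁿ` lying in `V` is at most `2^d`; equivalently, a uniformly random vector of
`{−1,1}ⁿ` lies in `V` with probability at most `2^{−(n−d)} = 2^{−dim(V^⊥)}`. -/
theorem stmt2 (n d : ℕ) (V : Submodule ℝ (Fin n → ℝ)) (hd : Module.finrank ℝ V = d) :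
    ((Finset.univ.filter
        (fun s : Fin n → Bool => (fun i => if s i then (1:ℝ) else -1) ∈ V)).card ≤ 2 ^ d)
    ∧ (((Finset.univ.filter
        (fun s : Fin n → Bool => (fun i => if s i then (1:ℝ) else -1) ∈ V)).card : ℝ) / 2 ^ n
          ≤ (2:ℝ) ^ (-((n : ℤ) - (d : ℤ)))) := by
  have hfd : FiniteDimensional ℝ V := by
    have : FiniteDimensional ℝ (Fin n → ℝ) := inferInstance
    exact FiniteDimensional.finiteDimensional_submodule V
  -- coordinate functionals on V
  set φ : Fin n → Module.Dual ℝ V := fun i => (LinearMap.proj i).comp V.subtype with hφ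
  set Φ : Submodule ℝ (Module.Dual ℝ V) := Submodule.span ℝ (Set.range φ) with hΦ
  have hco : Φ.dualCoannihilator = ⊥ := by
    rw [eq_bot_iff]
    intro x hx
    rw [Submodule.mem_dualCoannihilator] at hx
    have : ∀ i, (x : Fin n → ℝ) i = 0 := by
      intro i
      exact hx (φ i) (Submodule.subset_span ⟨i, rfl⟩)
    have : (x : Fin n → ℝ) = 0 := funext this
    simpa [Submodule.mem_bot] using Subtype.ext this
  have hΦtop : Φ = ⊤ := by
    have := Subspace.dualCoannihilator_dualAnnihilator_eq (W := Φ)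
    rw [hco] at this
    rw [← this, Submodule.dualAnnihilator_bot]
  obtain ⟨b, hbsub, hbspan, hbind⟩ := exists_linearIndependent ℝ (Set.range φ)
  rw [← hΦ, hΦtop] at hbspan
  have hbfin : b.Finite := hbind.setFinite
  haveI : Fintype b := hbfin.fintype
  -- b is a basis of the dual, so it has d elements
  have hcard : Fintype.card b = d := by
    let B : Module.Basis b ℝ (Module.Dual ℝ V) := Module.Basis.mk hbind (by rw [Subtype.range_coe, hbspan])
    have := Module.finrank_eq_card_basis B
    rw [Subspace.dual_finrank_eq, hd] at this
    exact this.symm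
  -- choose coordinates realizing each functional in b
  have hchoice : ∀ f : b, ∃ i : Fin n, φ i = (f : Module.Dual ℝ V) := fun f => hbsub f.2
  choose g hg using hchoice
  -- injectivity of the restriction map on sign vectors in V
  have key : Set.InjOn (fun s : Fin n → Bool => fun f : b => s (g f))
      ((Finset.univ.filter
        (fun s : Fin n → Bool => (fun i => if s i then (1:ℝ) else -1) ∈ V)) : Set (Fin n → Bool)) := by
    intro s hs s' hs' hss
    simp only [Finset.coe_filter, Set.mem_setOf_eq] at hs hs'
    set x : V := ⟨fun i => if s i then (1:ℝ) else -1, hs.2⟩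
    set x' : V := ⟨fun i => if s' i then (1:ℝ) else -1, hs'.2⟩
    have hxx : x - x' ∈ Φ.dualCoannihilator := by
      rw [Submodule.mem_dualCoannihilator]
      intro ψ hψ
      rw [hΦtop, ← hbspan] at hψ
      induction hψ using Submodule.span_induction with
      | mem f hf =>
        have hgf : φ (g ⟨f, hf⟩) = f := hg ⟨f, hf⟩
        have hs_eq : s (g ⟨f, hf⟩) = s' (g ⟨f, hf⟩) := congrFun hss ⟨f, hf⟩
        rw [map_sub, ← hgf]
        show (x : Fin n → ℝ) (g ⟨f, hf⟩) - (x' : Fin n → ℝ) (g ⟨f, hf⟩) = 0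
        simp [x, x', hs_eq]
      | zero => simp
      | add _ _ _ _ h1 h2 => simp [map_add, h1, h2]
      | smul c _ _ h1 => simp [map_smul, h1]
    rw [hco, Submodule.mem_bot, sub_eq_zero] at hxx
    have hvec : ∀ i, (if s i then (1:ℝ) else -1) = (if s' i then (1:ℝ) else -1) := by
      intro i
      exact congrFun (congrArg Subtype.val hxx) i
    funext i
    by_contra hne
    rcases Bool.eq_false_or_eq_true (s i) with h1 | h1 <;>
      rcases Bool.eq_false_or_eq_true (s' i) with h2 | h2 <;>
      simp [h1, h2] at hne ⊢ <;> · have := hvec i; simp [h1, h2] at this; linarith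
  have hmain : (Finset.univ.filter
      (fun s : Fin n → Bool => (fun i => if s i then (1:ℝ) else -1) ∈ V)).card ≤ 2 ^ d := by
    calc (Finset.univ.filter
        (fun s : Fin n → Bool => (fun i => if s i then (1:ℝ) else -1) ∈ V)).card
        ≤ (Finset.univ : Finset (b → Bool)).card := by
          apply Finset.card_le_card_of_injOn (fun s => fun f : b => s (g f))
            (fun _ _ => Finset.mem_univ _) key
      _ = 2 ^ d := by simp [Finset.card_univ, hcard]
  refine ⟨hmain, ?_⟩
  have h2n : (0:ℝ) < 2 ^ n := by positivity
  rw [div_le_iff₀ h2n]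
  have : (2:ℝ) ^ (-((n : ℤ) - (d : ℤ))) * 2 ^ n = 2 ^ d := by
    rw [← zpow_natCast (2:ℝ) n, ← zpow_add₀ (by norm_num : (2:ℝ) ≠ 0), ← zpow_natCast (2:ℝ) d]
    ring_nf
  rw [this]
  exact_mod_cast hmain
end

section
/- Let 1 ≤ k ≤ m be integers. If v₁, …, v_k are chosen independently and uniformly at random from {−1,1}^m, then the probability that v₁, …, v_k are linearly independent over ℝ is at least ∏_{i=1}^{k} (1 − 2^{i−1−m}); equivalently, the number of k-tuples (v₁,…,v_k) ∈ ({−1,1}^m)^k consisting of linearly independent vectors is at least 2^{km} · ∏_{i=1}^{k} (1 − 2^{i−1−m}). -/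
open Finset Submodule

/-- A subspace of `ℝ^m` of finite rank `≤ d` is determined by some `≤ d` coordinates. -/
lemma coords_determine (m d : ℕ) (W : Submodule ℝ (Fin m → ℝ))
    (hd : Module.finrank ℝ W ≤ d) :
    ∃ T : Finset (Fin m), T.card ≤ d ∧ ∀ x ∈ W, (∀ j ∈ T, x j = 0) → x = 0 := by
  rcases Nat.eq_zero_or_pos m with hm | hm
  · subst hm
    exact ⟨∅, by simp, fun x _ _ => funext fun j => j.elim0⟩
  haveI : Nonempty (Fin m) := ⟨⟨0, hm⟩⟩
  set d' := Module.finrank ℝ W with hd'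
  obtain ⟨b⟩ : Nonempty (Module.Basis (Fin d') ℝ W) := ⟨Module.finBasis ℝ W⟩
  set col : Fin m → (Fin d' → ℝ) := fun j i => (b i : Fin m → ℝ) j with hcol
  obtain ⟨t, hts, hspan, hli⟩ := exists_linearIndependent ℝ (Set.range col)
  have htfin : t.Finite := (Set.finite_range col).subset hts
  haveI : Fintype ↑t := htfin.fintype
  have hcard : t.toFinset.card ≤ d' := by
    rw [← finrank_span_set_eq_card hli]
    calc Module.finrank ℝ (span ℝ t) ≤ Module.finrank ℝ (Fin d' → ℝ) :=
          Submodule.finrank_le _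
      _ = d' := by simp
  set g : (Fin d' → ℝ) → Fin m := Function.invFun col with hg
  have hgcol : ∀ y ∈ t, col (g y) = y := fun y hy => Function.invFun_eq (hts hy)
  refine ⟨t.toFinset.image g, le_trans (card_image_le) (hcard.trans hd), ?_⟩
  intro x hx hzero
  set c : Fin d' → ℝ := fun i => b.repr ⟨x, hx⟩ i with hc
  have hxsum : ∀ j, x j = ∑ i, c i * col j i := by
    intro j
    have := b.sum_repr ⟨x, hx⟩
    have h2 : ((∑ i, c i • b i : W) : Fin m → ℝ) j = x j := by rw [this]
    rw [← h2]
    push_cast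
    simp [hcol, mul_comm]
  set f : (Fin d' → ℝ) →ₗ[ℝ] ℝ := ∑ i, c i • LinearMap.proj i with hf
  have hfapp : ∀ y, f y = ∑ i, c i * y i := by
    intro y; simp [hf]
  have hker : span ℝ (Set.range col) ≤ LinearMap.ker f := by
    rw [← hspan, span_le]
    intro y hy
    have : f y = x (g y) := by rw [hfapp, hxsum (g y), hgcol y hy]
    simp only [SetLike.mem_coe, LinearMap.mem_ker, this]
    exact hzero _ (mem_image.2 ⟨y, Set.mem_toFinset.2 hy, rfl⟩)
  funext j
  have : f (col j) = 0 := hker (subset_span (Set.mem_range_self j))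
  rw [hfapp] at this
  rw [hxsum]
  exact this
open Classical in
lemma odlyzko (m d : ℕ) (W : Submodule ℝ (Fin m → ℝ))
    (hT : ∃ T : Finset (Fin m), T.card ≤ d ∧ ∀ x ∈ W, (∀ j ∈ T, x j = 0) → x = 0) :
    (univ.filter (fun v : Fin m → Bool =>
      (fun j : Fin m => if v j then (1:ℝ) else -1) ∈ W)).card ≤ 2 ^ d := by
  obtain ⟨T, hTd, hTz⟩ := hT
  set sgn : (Fin m → Bool) → (Fin m → ℝ) := fun v j => if v j then (1:ℝ) else -1 with hsgn
  have hinj : Set.InjOn (fun v : Fin m → Bool => fun j : {x // x ∈ T} => v j)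
      ↑(univ.filter (fun v : Fin m → Bool => sgn v ∈ W)) := by
    intro v hv w hw hvw
    simp only [coe_filter, Set.mem_setOf_eq] at hv hw
    have hx : sgn v - sgn w ∈ W := sub_mem hv.2 hw.2
    have hz : ∀ j ∈ T, (sgn v - sgn w) j = 0 := by
      intro j hj
      have := congrFun hvw ⟨j, hj⟩
      simp only [hsgn, Pi.sub_apply]
      simp only at this
      rw [this, sub_self]
    have := hTz _ hx hz
    funext j
    have h2 := congrFun this j
    simp only [Pi.sub_apply, hsgn, Pi.zero_apply, sub_eq_zero] at h2
    by_cases h : v j <;> by_cases h' : w j <;> simp [h, h'] at h2 ⊢ <;> norm_num at h2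
  calc (univ.filter (fun v : Fin m → Bool => sgn v ∈ W)).card
      ≤ (univ : Finset ({x // x ∈ T} → Bool)).card :=
        card_le_card_of_injOn _ (fun _ _ => mem_univ _) hinj
    _ = 2 ^ T.card := by simp [card_univ]
    _ ≤ 2 ^ d := Nat.pow_le_pow_right (by norm_num) hTd

open Classical in
noncomputable def indepSet (m k : ℕ) : Finset (Fin k → Fin m → Bool) :=
  univ.filter (fun v => LinearIndependent ℝ
    (fun a : Fin k => fun j : Fin m => if v a j then (1:ℝ) else -1))

open Classical in
lemma step (m k : ℕ) :
    (indepSet m k).card * (2 ^ m - 2 ^ k) ≤ (indepSet m (k + 1)).card := by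
  set X := Fin m → Bool
  set sgn : X → (Fin m → ℝ) := fun v j => if v j then (1:ℝ) else -1 with hsgn
  -- fiberwise count over the tail
  have hfib := card_eq_sum_card_fiberwise
    (f := fun v : Fin (k+1) → X => Fin.tail v) (s := indepSet m (k+1)) (t := univ)
    (fun v _ => mem_univ _)
  have hfibcard : ∀ f : Fin k → X,
      (filter (fun v => Fin.tail v = f) (indepSet m (k+1))).card
      = (univ.filter (fun x : X =>
          LinearIndependent ℝ (fun a : Fin (k+1) => sgn ((Fin.cons x f : Fin (k+1) → X) a)))).card := by
    intro f
    apply Finset.card_nbij' (i := fun v => v 0) (j := fun x => Fin.cons x f)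
    · intro v hv
      simp only [mem_coe, indepSet, mem_filter, mem_univ, true_and] at hv
      simp only [mem_coe, mem_filter, mem_univ, true_and]
      have hv2 : v = Fin.cons (v 0) f := by
        rw [← hv.2]; exact (Fin.cons_self_tail v).symm
      rw [← hv2]
      exact hv.1
    · intro x hx
      simp only [mem_coe, mem_filter, mem_univ, true_and] at hx
      simp only [mem_coe, indepSet, mem_filter, mem_univ, true_and]
      exact ⟨hx, by simp [Fin.tail_cons]⟩
    · intro v hv
      simp only [mem_coe, mem_filter] at hv
      rw [← hv.2]; exact Fin.cons_self_tail v
    · intro x hx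
      simp
  rw [hfib]
  have hsub : ∑ f ∈ indepSet m k, (filter (fun v => Fin.tail v = f) (indepSet m (k+1))).card
      ≤ ∑ f : Fin k → X, (filter (fun v => Fin.tail v = f) (indepSet m (k+1))).card :=
    sum_le_sum_of_subset (subset_univ _)
  refine le_trans ?_ hsub
  have hbound : ∀ f ∈ indepSet m k,
      2 ^ m - 2 ^ k ≤ (filter (fun v => Fin.tail v = f) (indepSet m (k+1))).card := ?_
  · calc (indepSet m k).card * (2 ^ m - 2 ^ k)
        = (indepSet m k).card • (2 ^ m - 2 ^ k) := (smul_eq_mul _ _).symm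
      _ ≤ _ := card_nsmul_le_sum _ _ _ hbound
  intro f hf
  rw [hfibcard f]
  simp only [indepSet, mem_filter, mem_univ, true_and] at hf
  -- the span of the first k vectors
  set W : Submodule ℝ (Fin m → ℝ) := span ℝ (Set.range (fun a => sgn (f a))) with hW
  have hcond : ∀ x : X,
      LinearIndependent ℝ (fun a : Fin (k+1) => sgn ((Fin.cons x f : Fin (k+1) → X) a)) ↔ sgn x ∉ W := by
    intro x
    have hcomp : (fun a : Fin (k+1) => sgn ((Fin.cons x f : Fin (k+1) → X) a))
        = Fin.cons (sgn x) (fun a => sgn (f a)) := by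
      funext a
      exact congrFun (Fin.comp_cons sgn x f) a
    rw [hcomp, linearIndependent_fin_cons]
    exact ⟨fun h => h.2, fun h => ⟨hf, h⟩⟩
  have hrw : (univ.filter (fun x : X =>
      LinearIndependent ℝ (fun a : Fin (k+1) => sgn ((Fin.cons x f : Fin (k+1) → X) a))))
      = univ.filter (fun x : X => ¬ (sgn x ∈ W)) := by
    apply filter_congr; intro x _; exact iff_iff_eq.mp (hcond x) ▸ Iff.rfl
  rw [hrw, filter_not, card_sdiff_of_subset (filter_subset _ _)]
  have hbad : (univ.filter (fun x : X => sgn x ∈ W)).card ≤ 2 ^ k := by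
    have hrank : Module.finrank ℝ W ≤ k := by
      refine le_trans (finrank_span_le_card _) ?_
      rw [Set.toFinset_range]
      exact le_trans (card_image_le) (by simp)
    exact odlyzko m k W (coords_determine m k W hrank)
  have huniv : (univ : Finset X).card = 2 ^ m := by simp [X, card_univ]
  rw [huniv]
  exact Nat.sub_le_sub_left hbad _

lemma count_lower (m k : ℕ) :
    ∏ i ∈ range k, (2 ^ m - 2 ^ i) ≤ (indepSet m k).card := by
  induction k with
  | zero =>
      simp only [range_zero, prod_empty]
      have : (indepSet m 0) = univ := by
        apply Finset.eq_univ_of_forall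
        intro v
        simp only [indepSet, mem_filter, mem_univ, true_and]
        exact linearIndependent_empty_type
      rw [this]
      simp [card_univ]
  | succ k ih =>
      rw [prod_range_succ]
      exact le_trans (Nat.mul_le_mul_right _ ih) (step m k)

lemma real_prod_eq (m k : ℕ) (hkm : k ≤ m) :
    ((∏ i ∈ range k, (2 ^ m - 2 ^ i) : ℕ) : ℝ)
      = 2 ^ (k * m) * ∏ i ∈ Finset.Icc 1 k, (1 - (2:ℝ) ^ ((i : ℤ) - 1 - m)) := by
  have h1 : (2:ℝ) ^ (k * m) = ∏ _i ∈ Finset.Icc 1 k, (2:ℝ) ^ m := by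
    rw [prod_const, Nat.card_Icc, ← pow_mul, Nat.add_sub_cancel, Nat.mul_comm]
  rw [h1, ← prod_mul_distrib]
  have h2 : ∀ i ∈ Finset.Icc 1 k, (2:ℝ) ^ m * (1 - (2:ℝ) ^ ((i : ℤ) - 1 - m))
      = (2:ℝ) ^ m - 2 ^ (i - 1) := by
    intro i hi
    rw [Finset.mem_Icc] at hi
    rw [mul_sub, mul_one]
    congr 1
    rw [show (2:ℝ) ^ m = (2:ℝ) ^ (m : ℤ) from (zpow_natCast 2 m).symm,
      ← zpow_add₀ (by norm_num : (2:ℝ) ≠ 0)]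
    rw [show (m : ℤ) + ((i : ℤ) - 1 - m) = (i : ℤ) - 1 by ring]
    rw [show ((i : ℤ) - 1) = ((i - 1 : ℕ) : ℤ) by omega, zpow_natCast]
  rw [prod_congr rfl h2]
  rw [Nat.cast_prod]
  have h3 : ∀ i ∈ range k, ((2 ^ m - 2 ^ i : ℕ) : ℝ) = (2:ℝ) ^ m - 2 ^ i := by
    intro i hi
    rw [mem_range] at hi
    rw [Nat.cast_sub (Nat.pow_le_pow_right (by norm_num) (by omega))]
    push_cast
    ring
  rw [prod_congr rfl h3]
  refine Finset.prod_nbij' (fun x => x + 1) (fun x => x - 1)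
    ?_ ?_ ?_ ?_ ?_
  · intro a ha; simp only [mem_range] at ha; simp only [Finset.mem_Icc]; omega
  · intro b hb; simp only [Finset.mem_Icc] at hb; simp only [mem_range]; omega
  · intro a _; simp
  · intro b hb; simp only [Finset.mem_Icc] at hb; omega
  · intro a _; norm_num


open Classical in
/-- For `1 ≤ k ≤ m`, the number of `k`-tuples of vectors in `{−1,1}^m` that are linearly
independent over `ℝ` is at least `2^{km} · ∏_{i=1}^{k} (1 − 2^{i−1−m})`; equivalently,
`k` vectors chosen independently and uniformly at random from `{−1,1}^m` are linearly
independent with probability at least `∏_{i=1}^{k} (1 − 2^{i−1−m})`. -/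
theorem stmt3 (m k : ℕ) (hk : 1 ≤ k) (hkm : k ≤ m) :
    ((2:ℝ) ^ (k * m) * ∏ i ∈ Finset.Icc 1 k, (1 - (2:ℝ) ^ ((i : ℤ) - 1 - m))
      ≤ ((Finset.univ.filter (fun v : Fin k → Fin m → Bool =>
            LinearIndependent ℝ
              (fun a : Fin k => fun j : Fin m => if v a j then (1:ℝ) else -1))).card : ℝ))
    ∧ (∏ i ∈ Finset.Icc 1 k, (1 - (2:ℝ) ^ ((i : ℤ) - 1 - m))
      ≤ ((Finset.univ.filter (fun v : Fin k → Fin m → Bool =>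
            LinearIndependent ℝ
              (fun a : Fin k => fun j : Fin m => if v a j then (1:ℝ) else -1))).card : ℝ)
          / 2 ^ (k * m)) := by
  have hmain : (2:ℝ) ^ (k * m) * ∏ i ∈ Finset.Icc 1 k, (1 - (2:ℝ) ^ ((i : ℤ) - 1 - m))
      ≤ ((Finset.univ.filter (fun v : Fin k → Fin m → Bool =>
            LinearIndependent ℝ
              (fun a : Fin k => fun j : Fin m => if v a j then (1:ℝ) else -1))).card : ℝ) := by
    rw [← real_prod_eq m k hkm]
    have h := count_lower m k
    have hcast : ((∏ i ∈ range k, (2 ^ m - 2 ^ i) : ℕ) : ℝ) ≤ ((indepSet m k).card : ℝ) :=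
      Nat.cast_le.2 h
    refine le_trans hcast (le_of_eq ?_)
    congr 1
  refine ⟨hmain, ?_⟩
  rw [le_div_iff₀ (by positivity)]
  calc (∏ i ∈ Finset.Icc 1 k, (1 - (2:ℝ) ^ ((i : ℤ) - 1 - m))) * 2 ^ (k * m)
      = (2:ℝ) ^ (k * m) * ∏ i ∈ Finset.Icc 1 k, (1 - (2:ℝ) ^ ((i : ℤ) - 1 - m)) := by ring
    _ ≤ _ := hmain
end

section
/- Let 1 ≤ k ≤ n and 0 ≤ i ≤ n−k be integers, and suppose R(n,k) is nonempty. If G is chosen uniformly at random from R(n,k) and S is a uniformly random subset of {1,…,n} of size i, independent of G, then the probability that the k×(n−i) submatrix of G obtained by deleting the columns indexed by S has rank strictly less than k is at most 1 − ∏_{j=1}^{k} (1 − 2^{j−1−n+i}). -/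
/-- The `k×n` real `±1` matrix determined by a sign pattern `B`. -/
noncomputable def signMat (k n : ℕ) (B : Fin k → Fin n → Bool) : Matrix (Fin k) (Fin n) ℝ :=
  Matrix.of fun i j => if B i j then 1 else -1

/-- The ensemble `R(n,k)`: sign patterns of `k×n` `±1` matrices of full row rank `k`
(rank over the reals). -/
noncomputable def Rset (n k : ℕ) : Finset (Fin k → Fin n → Bool) :=
  Finset.univ.filter fun B => (signMat k n B).rank = k

/-- The rank (over `ℝ`) of the `k×(n−|S|)` submatrix of the `±1` matrix of `B` obtained by
deleting the columns indexed by `S`. -/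
noncomputable def delRank (k n : ℕ) (B : Fin k → Fin n → Bool) (S : Finset (Fin n)) : ℕ :=
  ((signMat k n B).submatrix id (fun j : {x : Fin n // x ∉ S} => (j : Fin n))).rank

set_option maxHeartbeats 1000000
open Finset Module
attribute [local instance] Classical.propDecidable

noncomputable section


def sgnv {ι : Type*} (b : ι → Bool) : ι → ℝ := fun j => if b j then 1 else -1

lemma sgnv_inj {ι : Type*} : Function.Injective (sgnv (ι := ι)) := by
  intro a b h
  funext j
  have := congrFun h j
  simp only [sgnv] at this
  cases ha : a j <;> cases hb : b j <;> simp [ha, hb] at this ⊢ <;> norm_num at this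

lemma lemA : ∀ (N : ℕ) (ι : Type) (_ : Fintype ι), Fintype.card ι ≤ N →
    ∀ (V : Submodule ℝ (ι → ℝ)),
    Nat.card {b : ι → Bool // sgnv b ∈ V} ≤ 2 ^ (finrank ℝ V) := by
  intro N
  induction N with
  | zero =>
    intro ι _ hcard V
    have : IsEmpty ι := by
      rw [← Fintype.card_eq_zero_iff]; omega
    calc Nat.card {b : ι → Bool // sgnv b ∈ V}
        ≤ Nat.card (ι → Bool) := Nat.card_le_card_of_injective _ Subtype.val_injective
      _ = 1 := by simp [Nat.card_eq_fintype_card, Fintype.card_fun]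
      _ ≤ 2 ^ finrank ℝ V := Nat.one_le_two_pow
  | succ N ih =>
    intro ι _ hcard V
    by_cases hι : Nonempty ι
    swap
    · have : IsEmpty ι := not_nonempty_iff.mp hι
      calc Nat.card {b : ι → Bool // sgnv b ∈ V}
          ≤ Nat.card (ι → Bool) := Nat.card_le_card_of_injective _ Subtype.val_injective
        _ = 1 := by simp [Nat.card_eq_fintype_card, Fintype.card_fun]
        _ ≤ 2 ^ finrank ℝ V := Nat.one_le_two_pow
    obtain ⟨l⟩ := hι
    set ι' := {j : ι // j ≠ l} with hι'
    have hcard' : Fintype.card ι' ≤ N := by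
      have h2 : Fintype.card {j : ι // ¬ j = l} = Fintype.card ι - Fintype.card {j : ι // j = l} :=
        Fintype.card_subtype_compl (fun j : ι => j = l)
      have h1 : Fintype.card {j : ι // j = l} = 1 := Fintype.card_subtype_eq l
      have h3 : Fintype.card ι' = Fintype.card {j : ι // ¬ j = l} := Fintype.card_congr (Equiv.refl _)
      omega
    set r : (ι → ℝ) →ₗ[ℝ] (ι' → ℝ) := LinearMap.funLeft ℝ ℝ (fun j => j.val) with hr
    set V' := V.map r with hV'
    have hres : ∀ b : ι → Bool, r (sgnv b) = sgnv (fun j : ι' => b j.val) := fun b => rfl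
    set f : {b : ι → Bool // sgnv b ∈ V} → {b' : ι' → Bool // sgnv b' ∈ V'} :=
      fun b => ⟨fun j => b.1 j.val, ⟨sgnv b.1, b.2, hres b.1⟩⟩ with hf
    have hIH := ih ι' inferInstance hcard' V'
    by_cases hsl : Pi.single l (1:ℝ) ∈ V
    · -- fiber bound 2, finrank V' ≤ finrank V - 1
      have hfib : ∀ y, Nat.card {b // f b = y} ≤ 2 := by
        intro y
        have hi2 : Function.Injective (fun b : {b // f b = y} => b.1.1 l) := by
          rintro ⟨⟨b₁, hb₁⟩, e₁⟩ ⟨⟨b₂, hb₂⟩, e₂⟩ h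
          simp only at h
          ext j
          by_cases hj : j = l
          · subst hj; exact h
          · exact congrFun (congrArg Subtype.val (e₁.trans e₂.symm)) ⟨j, hj⟩
        calc Nat.card {b // f b = y} ≤ Nat.card Bool := Nat.card_le_card_of_injective _ hi2
          _ = 2 := Nat.card_eq_fintype_card.trans Fintype.card_bool
      have hcardle : Nat.card {b : ι → Bool // sgnv b ∈ V}
          ≤ 2 * Nat.card {b' : ι' → Bool // sgnv b' ∈ V'} := by
        rw [Nat.card_eq_fintype_card, Nat.card_eq_fintype_card]
        rw [Fintype.card_congr (Equiv.sigmaFiberEquiv f).symm, Fintype.card_sigma]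
        calc (∑ y, Fintype.card {b // f b = y})
            ≤ ∑ _y : {b' : ι' → Bool // sgnv b' ∈ V'}, 2 := by
              refine Finset.sum_le_sum (fun y _ => ?_)
              rw [← Nat.card_eq_fintype_card]
              exact hfib y
          _ = 2 * Fintype.card {b' : ι' → Bool // sgnv b' ∈ V'} := by
              simp [Finset.sum_const, Nat.mul_comm]
      -- rank-nullity
      set g : V →ₗ[ℝ] (ι' → ℝ) := r ∘ₗ V.subtype with hg
      have hrange : LinearMap.range g = V' := by
        rw [hg, LinearMap.range_comp, Submodule.range_subtype]
      have hkerne : Nontrivial (LinearMap.ker g) := by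
        refine ⟨⟨⟨Pi.single l 1, hsl⟩, ?_⟩, 0, ?_⟩
        · rw [LinearMap.mem_ker]
          ext j
          exact Pi.single_eq_of_ne j.2 1
        · intro h
          have : (Pi.single l (1:ℝ) : ι → ℝ) = 0 := by
            exact congrArg Subtype.val (congrArg Subtype.val h)
          exact one_ne_zero (α := ℝ) (by simpa using congrFun this l)
      have hrn := LinearMap.finrank_range_add_finrank_ker g
      have hker1 : 1 ≤ finrank ℝ (LinearMap.ker g) := by
        have : 0 < finrank ℝ (LinearMap.ker g) := Module.finrank_pos (R := ℝ) (M := LinearMap.ker g)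
        omega
      have hV'le : finrank ℝ V' ≤ finrank ℝ V - 1 := by
        rw [← hrange]; omega
      have hV1 : 1 ≤ finrank ℝ V := by
        have : 0 < finrank ℝ V := by
          have : Nontrivial V := ⟨⟨⟨Pi.single l 1, hsl⟩, 0, by
            intro h
            have : (Pi.single l (1:ℝ) : ι → ℝ) = 0 := congrArg Subtype.val h
            exact one_ne_zero (α := ℝ) (by simpa using congrFun this l)⟩⟩
          exact finrank_pos
        omega
      calc Nat.card {b : ι → Bool // sgnv b ∈ V}
          ≤ 2 * Nat.card {b' : ι' → Bool // sgnv b' ∈ V'} := hcardle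
        _ ≤ 2 * 2 ^ finrank ℝ V' := by omega
        _ ≤ 2 * 2 ^ (finrank ℝ V - 1) := by
            have := Nat.pow_le_pow_right (show 0 < 2 by norm_num) hV'le
            omega
        _ = 2 ^ (finrank ℝ V - 1 + 1) := by rw [Nat.pow_succ]; ring
        _ = 2 ^ finrank ℝ V := by congr 1; omega
    · -- f injective
      have hinj : Function.Injective f := by
        rintro ⟨b₁, hb₁⟩ ⟨b₂, hb₂⟩ h
        have hrest : ∀ j : ι', b₁ j.val = b₂ j.val :=
          fun j => congrFun (congrArg Subtype.val h) j
        set c : ℝ := sgnv b₁ l - sgnv b₂ l with hc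
        have hdiff : sgnv b₁ - sgnv b₂ = c • (Pi.single l 1 : ι → ℝ) := by
          funext j
          by_cases hj : j = l
          · subst hj; simp [hc]
          · have : b₁ j = b₂ j := hrest ⟨j, hj⟩
            simp [sgnv, this, Pi.single_eq_of_ne hj]
        have hcz : c = 0 := by
          by_contra hcz
          apply hsl
          have hmem : sgnv b₁ - sgnv b₂ ∈ V := V.sub_mem hb₁ hb₂
          rw [hdiff] at hmem
          have := V.smul_mem c⁻¹ hmem
          rwa [smul_smul, inv_mul_cancel₀ hcz, one_smul] at this
        have hbl : b₁ l = b₂ l := by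
          have : sgnv b₁ l = sgnv b₂ l := by
            have := hc ▸ hcz; linarith [sub_eq_zero.mp this]
          simp only [sgnv] at this
          cases h1 : b₁ l <;> cases h2 : b₂ l <;> simp [h1, h2] at this ⊢ <;> norm_num at this
        have : b₁ = b₂ := by
          ext j
          by_cases hj : j = l
          · subst hj; exact hbl
          · exact hrest ⟨j, hj⟩
        exact Subtype.ext this
      calc Nat.card {b : ι → Bool // sgnv b ∈ V}
          ≤ Nat.card {b' : ι' → Bool // sgnv b' ∈ V'} := Nat.card_le_card_of_injective _ hinj
        _ ≤ 2 ^ finrank ℝ V' := hIH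
        _ ≤ 2 ^ finrank ℝ V := Nat.pow_le_pow_right (by norm_num)
              (by rw [hV']; exact Submodule.finrank_map_le r V)

lemma lemA' {ι : Type} [Fintype ι] (V : Submodule ℝ (ι → ℝ)) :
    Nat.card {b : ι → Bool // sgnv b ∈ V} ≤ 2 ^ (finrank ℝ V) :=
  lemA (Fintype.card ι) ι inferInstance le_rfl V

lemma lemB (ι : Type) [Fintype ι] (k : ℕ) :
    ∏ j ∈ Finset.range k, (2 ^ Fintype.card ι - 2 ^ j) ≤
      Nat.card {C : Fin k → ι → Bool // LinearIndependent ℝ (fun r => sgnv (C r))} := by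
  induction k with
  | zero =>
    simp only [Finset.range_zero, Finset.prod_empty]
    have : Nonempty {C : Fin 0 → ι → Bool // LinearIndependent ℝ (fun r => sgnv (C r))} :=
      ⟨⟨Fin.elim0, linearIndependent_empty_type⟩⟩
    exact Nat.one_le_iff_ne_zero.mpr (Nat.card_ne_zero.mpr ⟨this, inferInstance⟩)
  | succ k ih =>
    set m := Fintype.card ι
    -- equiv : tuples of length k+1 ≃ (b, C)
    set E : ((Fin k → ι → Bool) × (ι → Bool)) ≃ (Fin (k+1) → ι → Bool) :=
      (Equiv.prodComm _ _).trans (Fin.consEquiv (fun _ => ι → Bool)) with hE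
    have hcons : ∀ (b : ι → Bool) (C : Fin k → ι → Bool),
        (fun r => sgnv ((Fin.cons b C : Fin (k+1) → ι → Bool) r))
          = Fin.cons (sgnv b) (fun r => sgnv (C r)) := by
      intro b C
      funext r
      refine Fin.cases ?_ ?_ r <;> simp
    have hiff : ∀ (p : (Fin k → ι → Bool) × (ι → Bool)),
        LinearIndependent ℝ (fun r => sgnv ((E p) r)) ↔
          (LinearIndependent ℝ (fun r => sgnv (p.1 r)) ∧
            sgnv p.2 ∉ Submodule.span ℝ (Set.range (fun r => sgnv (p.1 r)))) := by
      rintro ⟨C, b⟩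
      have : E (C, b) = Fin.cons b C := rfl
      rw [this, hcons, linearIndependent_fin_cons]
    -- rewrite card via equiv and sigma
    have hc1 : Nat.card {C : Fin (k+1) → ι → Bool // LinearIndependent ℝ (fun r => sgnv (C r))}
        = Nat.card {p : (Fin k → ι → Bool) × (ι → Bool) //
            LinearIndependent ℝ (fun r => sgnv (p.1 r)) ∧
              sgnv p.2 ∉ Submodule.span ℝ (Set.range (fun r => sgnv (p.1 r)))} := by
      refine Nat.card_congr (Equiv.subtypeEquiv E.symm ?_)
      intro C
      rw [← hiff (E.symm C), E.apply_symm_apply]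
    -- sigma over C
    have hc2 : Nat.card {p : (Fin k → ι → Bool) × (ι → Bool) //
            LinearIndependent ℝ (fun r => sgnv (p.1 r)) ∧
              sgnv p.2 ∉ Submodule.span ℝ (Set.range (fun r => sgnv (p.1 r)))}
        = ∑ C : Fin k → ι → Bool, Nat.card {b : ι → Bool //
            LinearIndependent ℝ (fun r => sgnv (C r)) ∧
              sgnv b ∉ Submodule.span ℝ (Set.range (fun r => sgnv (C r)))} := by
      rw [Nat.card_eq_fintype_card]
      rw [Fintype.card_congr
        (Equiv.subtypeProdEquivSigmaSubtype (fun (C : Fin k → ι → Bool) (b : ι → Bool) =>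
          LinearIndependent ℝ (fun r => sgnv (C r)) ∧
            sgnv b ∉ Submodule.span ℝ (Set.range (fun r => sgnv (C r)))))]
      rw [Fintype.card_sigma]
      exact Finset.sum_congr rfl (fun C _ => (Nat.card_eq_fintype_card).symm)
    rw [hc1, hc2]
    -- per-C bound
    have hterm : ∀ C : Fin k → ι → Bool, LinearIndependent ℝ (fun r => sgnv (C r)) →
        2 ^ m - 2 ^ k ≤ Nat.card {b : ι → Bool //
            LinearIndependent ℝ (fun r => sgnv (C r)) ∧
              sgnv b ∉ Submodule.span ℝ (Set.range (fun r => sgnv (C r)))} := by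
      intro C hC
      set W := Submodule.span ℝ (Set.range (fun r => sgnv (C r))) with hW
      have hWrank : finrank ℝ W ≤ k := by
        have h := finrank_range_le_card (R := ℝ) (fun r : Fin k => sgnv (C r))
        rw [Fintype.card_fin] at h
        exact h
      have hin : Nat.card {b : ι → Bool // sgnv b ∈ W} ≤ 2 ^ k :=
        (lemA' W).trans (Nat.pow_le_pow_right (by norm_num) hWrank)
      have hsplit : Nat.card {b : ι → Bool // sgnv b ∉ W}
          = 2 ^ m - Nat.card {b : ι → Bool // sgnv b ∈ W} := by
        rw [Nat.card_eq_fintype_card, Nat.card_eq_fintype_card,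
          Fintype.card_subtype_compl (fun b : ι → Bool => sgnv b ∈ W)]
        congr 1
        simp [Fintype.card_fun]
        rfl
      have hEq : Nat.card {b : ι → Bool //
            LinearIndependent ℝ (fun r => sgnv (C r)) ∧ sgnv b ∉ W}
          = Nat.card {b : ι → Bool // sgnv b ∉ W} :=
        Nat.card_congr (Equiv.subtypeEquivRight (fun b => and_iff_right hC))
      rw [hEq, hsplit]
      exact Nat.sub_le_sub_left hin (2 ^ m)
    -- combine
    calc ∏ j ∈ Finset.range (k+1), (2 ^ m - 2 ^ j)
        = (∏ j ∈ Finset.range k, (2 ^ m - 2 ^ j)) * (2 ^ m - 2 ^ k) := Finset.prod_range_succ _ _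
      _ ≤ (Nat.card {C : Fin k → ι → Bool // LinearIndependent ℝ (fun r => sgnv (C r))})
            * (2 ^ m - 2 ^ k) := Nat.mul_le_mul_right _ ih
      _ ≤ ∑ C : Fin k → ι → Bool, Nat.card {b : ι → Bool //
            LinearIndependent ℝ (fun r => sgnv (C r)) ∧
              sgnv b ∉ Submodule.span ℝ (Set.range (fun r => sgnv (C r)))} := by
          rw [Nat.card_eq_fintype_card, Fintype.card_subtype]
          calc ((Finset.univ.filter fun C : Fin k → ι → Bool =>
                  LinearIndependent ℝ (fun r => sgnv (C r))).card) * (2 ^ m - 2 ^ k)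
              = ∑ C ∈ (Finset.univ.filter fun C : Fin k → ι → Bool =>
                  LinearIndependent ℝ (fun r => sgnv (C r))), (2 ^ m - 2 ^ k) := by
                rw [Finset.sum_const, smul_eq_mul]
            _ ≤ ∑ C ∈ (Finset.univ.filter fun C : Fin k → ι → Bool =>
                  LinearIndependent ℝ (fun r => sgnv (C r))), Nat.card {b : ι → Bool //
                    LinearIndependent ℝ (fun r => sgnv (C r)) ∧
                      sgnv b ∉ Submodule.span ℝ (Set.range (fun r => sgnv (C r)))} := by
                refine Finset.sum_le_sum (fun C hC => ?_)
                exact hterm C (by simpa using hC)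
            _ ≤ _ := Finset.sum_le_sum_of_subset (Finset.filter_subset _ _)

lemma rank_iff {k : ℕ} {ι : Type} [Fintype ι] (A : Matrix (Fin k) ι ℝ) :
    A.rank = k ↔ LinearIndependent ℝ (fun r => A r) := by
  constructor
  · intro h
    rw [linearIndependent_iff_card_eq_finrank_span, Fintype.card_fin]
    rw [show (fun r => A r) = A from rfl]
    have h2 : A.rank = Set.finrank ℝ (Set.range A) := Matrix.rank_eq_finrank_span_row A
    rw [← h2]
    exact h.symm
  · intro h
    have := LinearIndependent.rank_matrix (M := A) h
    simpa using this

lemma mem_Rset {n k : ℕ} {B : Fin k → Fin n → Bool} :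
    B ∈ Rset n k ↔ LinearIndependent ℝ (fun r => sgnv (B r)) := by
  rw [Rset, Finset.mem_filter]
  simp only [Finset.mem_univ, true_and]
  exact rank_iff (signMat k n B)

lemma delRank_iff {n k : ℕ} {B : Fin k → Fin n → Bool} {S : Finset (Fin n)} :
    delRank k n B S = k ↔
      LinearIndependent ℝ (fun r => sgnv (fun j : {x : Fin n // x ∉ S} => B r j.val)) := by
  rw [delRank]
  exact rank_iff _

lemma delRank_le {n k : ℕ} (B : Fin k → Fin n → Bool) (S : Finset (Fin n)) :
    delRank k n B S ≤ k := by
  rw [delRank]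
  simpa using Matrix.rank_le_card_height ((signMat k n B).submatrix id
    (fun j : {x : Fin n // x ∉ S} => (j : Fin n)))

lemma delRank_full {n k : ℕ} {B : Fin k → Fin n → Bool} {S : Finset (Fin n)}
    (h : delRank k n B S = k) : B ∈ Rset n k := by
  rw [mem_Rset]
  rw [delRank_iff] at h
  exact LinearIndependent.of_comp (LinearMap.funLeft ℝ ℝ (fun j : {x : Fin n // x ∉ S} => j.val)) h

def splitE (k n : ℕ) (S : Finset (Fin n)) :
    (Fin k → Fin n → Bool) ≃
      ((Fin k → {x : Fin n // x ∉ S} → Bool) × (Fin k → {x : Fin n // x ∈ S} → Bool)) where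
  toFun B := (fun r j => B r j.val, fun r j => B r j.val)
  invFun p := fun r x => if h : x ∈ S then p.2 r ⟨x, h⟩ else p.1 r ⟨x, h⟩
  left_inv B := by funext r x; by_cases h : x ∈ S <;> simp [h]
  right_inv p := by
    refine Prod.ext ?_ ?_ <;> (funext r j; simp [j.2])

lemma NS_bound (n k i : ℕ) (S : Finset (Fin n)) (hS : S.card = i) :
    (2 ^ i) ^ k * ∏ j ∈ Finset.range k, (2 ^ (n - i) - 2 ^ j) ≤
      (Finset.univ.filter fun B : Fin k → Fin n → Bool => delRank k n B S = k).card := by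
  classical
  have hσ : Fintype.card {x : Fin n // x ∈ S} = i := by
    rw [← hS]; exact Fintype.card_coe S
  have hcardι : Fintype.card {x : Fin n // x ∉ S} = n - i := by
    have h2 : Fintype.card {x : Fin n // ¬ x ∈ S} =
        Fintype.card (Fin n) - Fintype.card {x : Fin n // x ∈ S} :=
      Fintype.card_subtype_compl (fun x : Fin n => x ∈ S)
    rw [hσ, Fintype.card_fin] at h2
    exact h2
  have h1 : (Finset.univ.filter fun B : Fin k → Fin n → Bool => delRank k n B S = k).card
      = Nat.card {B : Fin k → Fin n → Bool // delRank k n B S = k} := by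
    rw [Nat.card_eq_fintype_card, Fintype.card_subtype]
  have h2 : Nat.card {B : Fin k → Fin n → Bool // delRank k n B S = k}
      = Nat.card {p : (Fin k → {x : Fin n // x ∉ S} → Bool) × (Fin k → {x : Fin n // x ∈ S} → Bool) //
          LinearIndependent ℝ (fun r => sgnv (p.1 r))} := by
    refine Nat.card_congr (Equiv.subtypeEquiv (splitE k n S) ?_)
    intro B
    rw [delRank_iff]
    exact Iff.rfl
  have h3 : Nat.card {p : (Fin k → {x : Fin n // x ∉ S} → Bool) × (Fin k → {x : Fin n // x ∈ S} → Bool) //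
          LinearIndependent ℝ (fun r => sgnv (p.1 r))}
      = Nat.card {C : Fin k → {x : Fin n // x ∉ S} → Bool //
          LinearIndependent ℝ (fun r => sgnv (C r))} * (2 ^ i) ^ k := by
    rw [Nat.card_congr (Equiv.prodSubtypeFstEquivSubtypeProd
      (p := fun C : Fin k → {x : Fin n // x ∉ S} → Bool =>
        LinearIndependent ℝ (fun r => sgnv (C r))))]
    rw [Nat.card_prod]
    congr 1
    rw [Nat.card_fun, Nat.card_fun]
    simp [hσ, Nat.card_eq_fintype_card]
  rw [h1, h2, h3, Nat.mul_comm (((2:ℕ) ^ i) ^ k)]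
  refine Nat.mul_le_mul_right _ ?_
  have := lemB {x : Fin n // x ∉ S} k
  rwa [hcardι] at this

lemma perS (n k i : ℕ) (hkn : k ≤ n) (hi : i ≤ n - k)
    (S : Finset (Fin n)) (hS : S.card = i) :
    (((Rset n k).filter (fun B => delRank k n B S < k)).card : ℝ)
      ≤ ((Rset n k).card : ℝ) *
        (1 - ∏ j ∈ Finset.Icc 1 k, (1 - (2:ℝ) ^ ((j : ℤ) - 1 - n + i))) := by
  classical
  have hin : i ≤ n := le_trans hi (Nat.sub_le n k)
  have hm : k ≤ n - i := by omega
  set m := n - i with hmdef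
  set P : ℝ := ∏ j ∈ Finset.Icc 1 k, (1 - (2:ℝ) ^ ((j : ℤ) - 1 - n + i)) with hP
  set N := (Finset.univ.filter fun B : Fin k → Fin n → Bool => delRank k n B S = k).card with hN
  have hsubset : (Finset.univ.filter fun B : Fin k → Fin n → Bool => delRank k n B S = k)
      ⊆ Rset n k := fun B hB => delRank_full (Finset.mem_filter.mp hB).2
  have hfe : (Rset n k).filter (fun B => delRank k n B S < k)
      = Rset n k \ (Finset.univ.filter fun B : Fin k → Fin n → Bool => delRank k n B S = k) := by
    ext B
    simp only [Finset.mem_filter, Finset.mem_sdiff, Finset.mem_univ, true_and]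
    constructor
    · rintro ⟨hR, hlt⟩
      exact ⟨hR, fun he => by omega⟩
    · rintro ⟨hR, hne⟩
      exact ⟨hR, lt_of_le_of_ne (delRank_le B S) hne⟩
  have hcard : ((Rset n k).filter (fun B => delRank k n B S < k)).card
      = (Rset n k).card - N := by
    rw [hfe, Finset.card_sdiff_of_subset hsubset]
  have hNle : N ≤ (Rset n k).card := Finset.card_le_card hsubset
  rw [hcard, Nat.cast_sub hNle]
  -- suffices : R * P ≤ N
  rw [mul_sub, mul_one, sub_le_sub_iff_left]
  -- N ≥ (2^n)^k * P ≥ R * P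
  have hP0 : 0 ≤ P := by
    refine Finset.prod_nonneg (fun j hj => ?_)
    have hj' := (Finset.mem_Icc.mp hj).2
    have he : (j : ℤ) - 1 - n + i ≤ 0 := by
      have h1 : (i : ℤ) ≤ (n : ℤ) - (k : ℤ) := by
        have := Nat.cast_le (α := ℤ) |>.mpr hi
        rwa [Nat.cast_sub hkn] at this
      have h2 : (j : ℤ) ≤ k := Nat.cast_le.mpr hj'
      omega
    have := zpow_le_one_of_nonpos₀ (by norm_num : (1:ℝ) ≤ 2) he
    linarith
  have hRle : ((Rset n k).card : ℝ) ≤ ((2:ℝ) ^ n) ^ k := by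
    have h1 : (Rset n k).card ≤ ((2:ℕ) ^ n) ^ k := by
      calc (Rset n k).card ≤ (Finset.univ : Finset (Fin k → Fin n → Bool)).card :=
            Finset.card_le_card (Finset.subset_univ _)
        _ = ((2:ℕ) ^ n) ^ k := by
            rw [Finset.card_univ]
            simp [Fintype.card_fun]
    calc ((Rset n k).card : ℝ) ≤ (((2:ℕ) ^ n) ^ k : ℕ) := Nat.cast_le.mpr h1
      _ = ((2:ℝ) ^ n) ^ k := by push_cast; ring
  have hNge : ((2:ℝ) ^ n) ^ k * P ≤ (N : ℝ) := by
    have hnat := NS_bound n k i S hS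
    have hc : (((2 ^ i) ^ k * ∏ j ∈ Finset.range k, (2 ^ m - 2 ^ j) : ℕ) : ℝ)
        = ((2:ℝ) ^ i) ^ k * ∏ j ∈ Finset.range k, ((2:ℝ) ^ m - 2 ^ j) := by
      rw [Nat.cast_mul, Nat.cast_prod]
      congr 1
      · push_cast; ring
      · refine Finset.prod_congr rfl (fun j hj => ?_)
        have hjk : j < k := Finset.mem_range.mp hj
        have : (2:ℕ) ^ j ≤ 2 ^ m := Nat.pow_le_pow_right (by norm_num) (by omega)
        rw [Nat.cast_sub this]
        push_cast; ring
    have hprod : ∏ j ∈ Finset.range k, ((2:ℝ) ^ m - 2 ^ j)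
        = ((2:ℝ) ^ m) ^ k * ∏ j ∈ Finset.range k, (1 - (2:ℝ) ^ ((j:ℤ) - m)) := by
      have hpc : ((2:ℝ)^m)^k = ∏ _j ∈ Finset.range k, (2:ℝ)^m := by
        rw [Finset.prod_const, Finset.card_range]
      rw [hpc, ← Finset.prod_mul_distrib]
      refine Finset.prod_congr rfl (fun j hj => ?_)
      have : (2:ℝ) ^ m * (2:ℝ) ^ ((j:ℤ) - m) = 2 ^ j := by
        rw [show ((2:ℝ) ^ m) = (2:ℝ) ^ (m : ℤ) from (zpow_natCast 2 m).symm,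
          ← zpow_add₀ (by norm_num : (2:ℝ) ≠ 0)]
        rw [show ((m:ℤ) + ((j:ℤ) - m)) = (j:ℤ) by ring, zpow_natCast]
      rw [mul_sub, mul_one, this]
    have hre : ∏ j ∈ Finset.range k, (1 - (2:ℝ) ^ ((j:ℤ) - m)) = P := by
      rw [hP]
      refine Finset.prod_bij' (fun j _ => j + 1) (fun j _ => j - 1) ?_ ?_ ?_ ?_ ?_
      · intro j hj
        have hjk := Finset.mem_range.mp hj
        show j + 1 ∈ Finset.Icc 1 k
        rw [Finset.mem_Icc]
        omega
      · intro j hj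
        have hjk := Finset.mem_Icc.mp hj
        show j - 1 ∈ Finset.range k
        rw [Finset.mem_range]
        omega
      · intro j hj
        show j + 1 - 1 = j
        omega
      · intro j hj
        have hjk := Finset.mem_Icc.mp hj
        show j - 1 + 1 = j
        omega
      · intro j hj
        show (1:ℝ) - 2 ^ ((j:ℤ) - m) = 1 - 2 ^ ((↑(j+1):ℤ) - 1 - n + i)
        have hmi : ((m:ℤ)) = (n : ℤ) - i := by
          rw [hmdef, Nat.cast_sub hin]
        have hexp : (j:ℤ) - m = (↑(j+1):ℤ) - 1 - n + i := by push_cast; omega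
        rw [hexp]
    have hpow : ((2:ℝ) ^ i) ^ k * ((2:ℝ) ^ m) ^ k = ((2:ℝ) ^ n) ^ k := by
      rw [← mul_pow, ← pow_add]
      congr 2
      omega
    calc ((2:ℝ) ^ n) ^ k * P = ((2:ℝ) ^ i) ^ k * (((2:ℝ) ^ m) ^ k * P) := by
          rw [← mul_assoc, hpow]
      _ = (((2 ^ i) ^ k * ∏ j ∈ Finset.range k, (2 ^ m - 2 ^ j) : ℕ) : ℝ) := by
          rw [hc, hprod, hre]
      _ ≤ (N : ℝ) := Nat.cast_le.mpr hnat
  calc ((Rset n k).card : ℝ) * P ≤ ((2:ℝ) ^ n) ^ k * P :=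
        mul_le_mul_of_nonneg_right hRle hP0
    _ ≤ (N : ℝ) := hNge

/-- For `1 ≤ k ≤ n` and `0 ≤ i ≤ n−k`, if `G` is uniform over `R(n,k)` and `S` is an
independent uniformly random size-`i` subset of the columns, then the probability that
deleting the columns indexed by `S` destroys full row rank is at most
`1 − ∏_{j=1}^{k} (1 − 2^{j−1−n+i})`. -/
theorem stmt4 (n k i : ℕ) (hk : 1 ≤ k) (hkn : k ≤ n) (hi : i ≤ n - k)
    (hne : (Rset n k).Nonempty) :
    ((((Rset n k) ×ˢ Finset.powersetCard i (Finset.univ : Finset (Fin n))).filter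
        (fun p => delRank k n p.1 p.2 < k)).card : ℝ)
      / (((Rset n k).card : ℝ) * (n.choose i : ℝ))
    ≤ 1 - ∏ j ∈ Finset.Icc 1 k, (1 - (2:ℝ) ^ ((j : ℤ) - 1 - n + i)) := by
  classical
  have hin : i ≤ n := le_trans hi (Nat.sub_le n k)
  set T := Finset.powersetCard i (Finset.univ : Finset (Fin n)) with hT
  set Q := ((Rset n k) ×ˢ T).filter (fun p => delRank k n p.1 p.2 < k) with hQ
  set P := ∏ j ∈ Finset.Icc 1 k, (1 - (2:ℝ) ^ ((j : ℤ) - 1 - n + i)) with hP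
  have hTcard : T.card = n.choose i := by
    rw [hT, Finset.card_powersetCard, Finset.card_univ, Fintype.card_fin]
  have hmem : ∀ p ∈ Q, p.2 ∈ T := fun p hp =>
    (Finset.mem_product.mp (Finset.mem_filter.mp hp).1).2
  have hsum : Q.card = ∑ S ∈ T, (Q.filter (fun p => p.2 = S)).card :=
    Finset.card_eq_sum_card_fiberwise hmem
  have hfiber : ∀ S ∈ T, (Q.filter (fun p => p.2 = S)).card
      = ((Rset n k).filter (fun B => delRank k n B S < k)).card := by
    intro S hS
    refine Finset.card_bij' (fun p _ => p.1) (fun B _ => (B, S)) ?_ ?_ ?_ ?_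
    · intro p hp
      obtain ⟨hp1, hp2⟩ := Finset.mem_filter.mp hp
      obtain ⟨hp3, hp4⟩ := Finset.mem_filter.mp hp1
      rw [Finset.mem_filter]
      refine ⟨(Finset.mem_product.mp hp3).1, ?_⟩
      rwa [hp2] at hp4
    · intro B hB
      obtain ⟨hB1, hB2⟩ := Finset.mem_filter.mp hB
      rw [Finset.mem_filter]
      exact ⟨Finset.mem_filter.mpr ⟨Finset.mem_product.mpr ⟨hB1, hS⟩, hB2⟩, rfl⟩
    · intro p hp
      have h2 := (Finset.mem_filter.mp hp).2
      exact Prod.ext rfl h2.symm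
    · intro B hB; rfl
  have hperS : ∀ S ∈ T, (((Rset n k).filter (fun B => delRank k n B S < k)).card : ℝ)
      ≤ ((Rset n k).card : ℝ) * (1 - P) := fun S hS =>
    perS n k i hkn hi S (Finset.mem_powersetCard.mp hS).2
  have hRpos : 0 < ((Rset n k).card : ℝ) := by
    exact_mod_cast Finset.card_pos.mpr hne
  have hCpos : 0 < ((n.choose i : ℕ) : ℝ) := by
    exact_mod_cast Nat.choose_pos hin
  rw [div_le_iff₀ (mul_pos hRpos hCpos)]
  calc (Q.card : ℝ)
      = ∑ S ∈ T, (((Rset n k).filter (fun B => delRank k n B S < k)).card : ℝ) := by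
        rw [hsum, Nat.cast_sum]
        exact Finset.sum_congr rfl (fun S hS => by rw [hfiber S hS])
    _ ≤ ∑ S ∈ T, ((Rset n k).card : ℝ) * (1 - P) := Finset.sum_le_sum hperS
    _ = T.card * (((Rset n k).card : ℝ) * (1 - P)) := by
        rw [Finset.sum_const, nsmul_eq_mul]
    _ = (1 - P) * (((Rset n k).card : ℝ) * (n.choose i : ℝ)) := by
        rw [hTcard]; ring

end
end

section
/- Let 1 ≤ k < n be integers and let v be an integer with 0 ≤ v ≤ n−k−1. Then Σ_{i=1}^{n−k} (1/i)·q_{n,k}(i) ≤ v/(n−k−v+1) + k·(1 + ln(n−k−v))·2^{−v}, where q_{n,k}(i) := 1 − ∏_{j=1}^{k} (1 − 2^{j−1−n+i}). -/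
/-- Weierstrass-type inequality: `1 - ∑ a ≤ ∏ (1 - a)` for `a ∈ [0,1]`. -/
lemma aux_one_sub_sum_le_prod {ι : Type*} (s : Finset ι) (a : ι → ℝ)
    (h0 : ∀ j ∈ s, 0 ≤ a j) (h1 : ∀ j ∈ s, a j ≤ 1) :
    1 - ∑ j ∈ s, a j ≤ ∏ j ∈ s, (1 - a j) := by
  classical
  induction s using Finset.induction_on with
  | empty => simp
  | @insert x s hx ih =>
    rw [Finset.sum_insert hx, Finset.prod_insert hx]
    have h0x : 0 ≤ a x := h0 x (Finset.mem_insert_self _ _)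
    have h1x : a x ≤ 1 := h1 x (Finset.mem_insert_self _ _)
    have h0s : ∀ j ∈ s, 0 ≤ a j := fun j hj => h0 j (Finset.mem_insert_of_mem hj)
    have h1s : ∀ j ∈ s, a j ≤ 1 := fun j hj => h1 j (Finset.mem_insert_of_mem hj)
    have hs := ih h0s h1s
    have hsum : 0 ≤ ∑ j ∈ s, a j := Finset.sum_nonneg h0s
    nlinarith [hsum]

/-- Geometric sum bound: `∑_{i=1}^{w} 2^(i-m-1) ≤ 2^(w-m)`. -/
lemma aux_geom (m : ℕ) : ∀ w : ℕ,
    ∑ i ∈ Finset.Ioc 0 w, (2:ℝ) ^ ((i : ℤ) - m - 1) ≤ (2:ℝ) ^ ((w : ℤ) - m) := by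
  intro w
  induction w with
  | zero => simp
  | succ w ih =>
    rw [Finset.sum_Ioc_succ_top (Nat.zero_le w)]
    have h1 : ((w : ℤ) + 1) - m - 1 = (w : ℤ) - m := by ring
    have h2 : ((w : ℤ) + 1) - m = ((w : ℤ) - m) + 1 := by ring
    push_cast
    rw [h1, h2, zpow_add₀ (by norm_num : (2:ℝ) ≠ 0)]
    nlinarith [ih]

/-- Let `1 ≤ k < n` be integers and let `v` be an integer with `0 ≤ v ≤ n−k−1`. Then
`Σ_{i=1}^{n−k} (1/i)·q_{n,k}(i) ≤ v/(n−k−v+1) + k·(1 + ln(n−k−v))·2^{−v}`,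
where `q_{n,k}(i) := 1 − ∏_{j=1}^{k} (1 − 2^{j−1−n+i})`. -/
theorem stmt10 (n k v : ℕ) (hk : 1 ≤ k) (hkn : k < n) (hv : v ≤ n - k - 1) :
    ∑ i ∈ Finset.Icc 1 (n - k),
        (1 / (i : ℝ)) * (1 - ∏ j ∈ Finset.Icc 1 k, (1 - (2:ℝ) ^ ((j : ℤ) - 1 - n + i)))
      ≤ (v : ℝ) / ((n : ℝ) - k - v + 1)
        + (k : ℝ) * (1 + Real.log ((n : ℝ) - k - v)) * (2:ℝ) ^ (-(v : ℤ)) := by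
  set m : ℕ := n - k with hm
  have hm1 : 1 ≤ m := Nat.le_sub_of_add_le (by omega)
  have hvm : v < m := by omega
  set w : ℕ := m - v with hwdef
  have hw1 : 1 ≤ w := by omega
  have hwm : w ≤ m := by omega
  have hwv : w + v = m := by omega
  have hmZ : (m : ℤ) = (n : ℤ) - k := by
    have : (m : ℕ) = n - k := hm
    omega
  have hmR : (m : ℝ) = (n : ℝ) - k := by
    have := Nat.cast_sub hkn.le (R := ℝ)
    rw [hm]; exact this
  have hwR : (w : ℝ) = (n : ℝ) - k - v := by
    rw [← hmR, hwdef, Nat.cast_sub hvm.le]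
  -- per-term facts
  have key : ∀ i ∈ Finset.Icc 1 m,
      0 ≤ 1 - ∏ j ∈ Finset.Icc 1 k, (1 - (2:ℝ) ^ ((j : ℤ) - 1 - n + i)) ∧
      1 - ∏ j ∈ Finset.Icc 1 k, (1 - (2:ℝ) ^ ((j : ℤ) - 1 - n + i)) ≤ 1 ∧
      1 - ∏ j ∈ Finset.Icc 1 k, (1 - (2:ℝ) ^ ((j : ℤ) - 1 - n + i))
        ≤ (k : ℝ) * (2:ℝ) ^ ((i : ℤ) - m - 1) := by
    intro i hi
    rw [Finset.mem_Icc] at hi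
    have hterm : ∀ j ∈ Finset.Icc 1 k,
        (0:ℝ) ≤ (2:ℝ) ^ ((j : ℤ) - 1 - n + i) ∧
        (2:ℝ) ^ ((j : ℤ) - 1 - n + i) ≤ (2:ℝ) ^ ((i : ℤ) - m - 1) ∧
        (2:ℝ) ^ ((j : ℤ) - 1 - n + i) ≤ 1 := by
      intro j hj
      rw [Finset.mem_Icc] at hj
      have he : (j : ℤ) - 1 - n + i ≤ (i : ℤ) - m - 1 := by
        rw [hmZ]; omega
      have he1 : (i : ℤ) - m - 1 ≤ 0 := by omega
      refine ⟨by positivity, zpow_le_zpow_right₀ (by norm_num) he, ?_⟩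
      calc (2:ℝ) ^ ((j : ℤ) - 1 - n + i) ≤ (2:ℝ) ^ ((i : ℤ) - m - 1) :=
            zpow_le_zpow_right₀ (by norm_num) he
        _ ≤ (2:ℝ) ^ (0:ℤ) := zpow_le_zpow_right₀ (by norm_num) he1
        _ = 1 := by norm_num
    have hP1 : ∏ j ∈ Finset.Icc 1 k, (1 - (2:ℝ) ^ ((j : ℤ) - 1 - n + i)) ≤ 1 :=
      Finset.prod_le_one (fun j hj => by linarith [(hterm j hj).2.2])
        (fun j hj => by linarith [(hterm j hj).1])
    have hP0 : 0 ≤ ∏ j ∈ Finset.Icc 1 k, (1 - (2:ℝ) ^ ((j : ℤ) - 1 - n + i)) :=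
      Finset.prod_nonneg (fun j hj => by linarith [(hterm j hj).2.2])
    refine ⟨by linarith, by linarith, ?_⟩
    have hws := aux_one_sub_sum_le_prod (Finset.Icc 1 k)
        (fun j => (2:ℝ) ^ ((j : ℤ) - 1 - n + i))
        (fun j hj => (hterm j hj).1) (fun j hj => (hterm j hj).2.2)
    have hsum : ∑ j ∈ Finset.Icc 1 k, (2:ℝ) ^ ((j : ℤ) - 1 - n + i)
        ≤ (k : ℝ) * (2:ℝ) ^ ((i : ℤ) - m - 1) := by
      calc ∑ j ∈ Finset.Icc 1 k, (2:ℝ) ^ ((j : ℤ) - 1 - n + i)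
          ≤ ∑ j ∈ Finset.Icc 1 k, (2:ℝ) ^ ((i : ℤ) - m - 1) :=
            Finset.sum_le_sum (fun j hj => (hterm j hj).2.1)
        _ = (k : ℝ) * (2:ℝ) ^ ((i : ℤ) - m - 1) := by
            rw [Finset.sum_const, Nat.card_Icc]; simp
    linarith
  -- split the sum
  rw [show Finset.Icc 1 m = Finset.Ioc 0 m from Finset.Icc_add_one_left_eq_Ioc 0 m,
    ← Finset.sum_Ioc_consecutive _ (Nat.zero_le w) hwm]
  have hchunk1 : ∑ i ∈ Finset.Ioc 0 w,
      (1 / (i : ℝ)) * (1 - ∏ j ∈ Finset.Icc 1 k, (1 - (2:ℝ) ^ ((j : ℤ) - 1 - n + i)))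
      ≤ (k : ℝ) * (2:ℝ) ^ (-(v : ℤ)) := by
    calc ∑ i ∈ Finset.Ioc 0 w,
        (1 / (i : ℝ)) * (1 - ∏ j ∈ Finset.Icc 1 k, (1 - (2:ℝ) ^ ((j : ℤ) - 1 - n + i)))
        ≤ ∑ i ∈ Finset.Ioc 0 w, (k : ℝ) * (2:ℝ) ^ ((i : ℤ) - m - 1) := by
          refine Finset.sum_le_sum (fun i hi => ?_)
          rw [Finset.mem_Ioc] at hi
          have hi' : i ∈ Finset.Icc 1 m := Finset.mem_Icc.mpr ⟨hi.1, hi.2.trans hwm⟩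
          obtain ⟨h0, h1, hb⟩ := key i hi'
          have hinv : 1 / (i : ℝ) ≤ 1 := by
            rw [div_le_one (by exact_mod_cast hi.1)]
            exact_mod_cast hi.1
          calc (1 / (i : ℝ)) * _ ≤ 1 * (1 - ∏ j ∈ Finset.Icc 1 k,
                (1 - (2:ℝ) ^ ((j : ℤ) - 1 - n + i))) :=
              mul_le_mul_of_nonneg_right hinv h0
            _ = _ := one_mul _
            _ ≤ (k : ℝ) * (2:ℝ) ^ ((i : ℤ) - m - 1) := hb
      _ = (k : ℝ) * ∑ i ∈ Finset.Ioc 0 w, (2:ℝ) ^ ((i : ℤ) - m - 1) := by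
          rw [Finset.mul_sum]
      _ ≤ (k : ℝ) * (2:ℝ) ^ ((w : ℤ) - m) := by
          have := aux_geom m w
          have hk0 : (0:ℝ) ≤ (k:ℝ) := by positivity
          exact mul_le_mul_of_nonneg_left this hk0
      _ = (k : ℝ) * (2:ℝ) ^ (-(v : ℤ)) := by
          congr 1
          congr 1
          omega
  have hchunk2 : ∑ i ∈ Finset.Ioc w m,
      (1 / (i : ℝ)) * (1 - ∏ j ∈ Finset.Icc 1 k, (1 - (2:ℝ) ^ ((j : ℤ) - 1 - n + i)))
      ≤ (v : ℝ) / ((w : ℝ) + 1) := by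
    calc ∑ i ∈ Finset.Ioc w m,
        (1 / (i : ℝ)) * (1 - ∏ j ∈ Finset.Icc 1 k, (1 - (2:ℝ) ^ ((j : ℤ) - 1 - n + i)))
        ≤ ∑ i ∈ Finset.Ioc w m, 1 / ((w : ℝ) + 1) := by
          refine Finset.sum_le_sum (fun i hi => ?_)
          rw [Finset.mem_Ioc] at hi
          have hi' : i ∈ Finset.Icc 1 m := Finset.mem_Icc.mpr ⟨le_trans hw1 hi.1.le, hi.2⟩
          obtain ⟨h0, h1, _⟩ := key i hi'
          have hiw : (w : ℝ) + 1 ≤ (i : ℝ) := by exact_mod_cast hi.1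
          have hipos : (0:ℝ) < (i : ℝ) := by
            have : 0 < i := by omega
            exact_mod_cast this
          have hinv : 1 / (i : ℝ) ≤ 1 / ((w : ℝ) + 1) :=
            one_div_le_one_div_of_le (by positivity) hiw
          calc (1 / (i : ℝ)) * _ ≤ (1 / (i : ℝ)) * 1 :=
              mul_le_mul_of_nonneg_left h1 (by positivity)
            _ = 1 / (i : ℝ) := mul_one _
            _ ≤ 1 / ((w : ℝ) + 1) := hinv
      _ = (v : ℝ) / ((w : ℝ) + 1) := by
          rw [Finset.sum_const, Nat.card_Ioc]
          have : m - w = v := by omega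
          rw [this, nsmul_eq_mul]
          field_simp
  have hln : 0 ≤ Real.log ((n : ℝ) - k - v) := by
    rw [← hwR]
    apply Real.log_nonneg
    exact_mod_cast hw1
  have h2v : (0:ℝ) ≤ (2:ℝ) ^ (-(v : ℤ)) := by positivity
  have hfinal : (k : ℝ) * (2:ℝ) ^ (-(v : ℤ))
      ≤ (k : ℝ) * (1 + Real.log ((n : ℝ) - k - v)) * (2:ℝ) ^ (-(v : ℤ)) := by
    have hk0 : (0:ℝ) ≤ (k:ℝ) := by positivity
    nlinarith [mul_nonneg (mul_nonneg hk0 hln) h2v]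
  have hdenom : (w : ℝ) + 1 = (n : ℝ) - k - v + 1 := by rw [hwR]
  rw [← hdenom]
  linarith
end

section
/- Fix an integer k ≥ 1 and reals μ > 0 and α > 0. Let T be a nonnegative real-valued random variable and let g : ℝ → ℝ be a measurable function with 0 ≤ g(ε) ≤ 1 for all ε ∈ [0,1], such that Pr(T > τ) = 1 for all 0 ≤ τ < 1/k and Pr(T > τ) = g(exp(−(μ(kτ−1))^α)) for all τ ≥ 1/k. Then, as an identity in the extended nonnegative reals, E[T] = 1/k + (1/(μkα)) ∫₀¹ g(ε) / (ε·(ln(1/ε))^{1−1/α}) dε. -/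
open MeasureTheory ProbabilityTheory

/-- Average execution time under the shifted-Weibull server model. For `k ≥ 1`, `μ > 0`,
`α > 0`, a nonnegative random variable `T` with `Pr(T > τ) = 1` for `0 ≤ τ < 1/k` and
`Pr(T > τ) = g(exp(−(μ(kτ−1))^α))` for `τ ≥ 1/k` (with `g : ℝ → [0,1]` measurable), we
have, as an identity in `ℝ≥0∞`:
`E[T] = 1/k + (1/(μkα)) ∫₀¹ g(ε)/(ε·(ln(1/ε))^{1−1/α}) dε`. -/
theorem stmt13 {Ω : Type*} [MeasureSpace Ω] [IsProbabilityMeasure (ℙ : Measure Ω)]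
    (k : ℕ) (hk : 1 ≤ k) (μ α : ℝ) (hμ : 0 < μ) (hα : 0 < α)
    (T : Ω → ℝ) (hT : Measurable T) (hTnn : ∀ ω, 0 ≤ T ω)
    (g : ℝ → ℝ) (hg : Measurable g)
    (hg01 : ∀ ε ∈ Set.Icc (0:ℝ) 1, g ε ∈ Set.Icc (0:ℝ) 1)
    (h1 : ∀ τ : ℝ, 0 ≤ τ → τ < 1 / (k : ℝ) → ℙ {ω : Ω | τ < T ω} = 1)
    (h2 : ∀ τ : ℝ, 1 / (k : ℝ) ≤ τ →
        ℙ {ω : Ω | τ < T ω}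
          = ENNReal.ofReal (g (Real.exp (-((μ * ((k : ℝ) * τ - 1)) ^ α))))) :
    ∫⁻ ω, ENNReal.ofReal (T ω) ∂ℙ
      = ENNReal.ofReal (1 / (k : ℝ))
        + ENNReal.ofReal (1 / (μ * k * α))
          * ∫⁻ ε in Set.Ioo (0:ℝ) 1,
              ENNReal.ofReal (g ε / (ε * Real.log (1 / ε) ^ ((1:ℝ) - 1 / α))) := by
  have hk0 : (0:ℝ) < (k:ℝ) := by exact_mod_cast Nat.lt_of_lt_of_le Nat.zero_lt_one hk
  have hk0' : (k:ℝ) ≠ 0 := hk0.ne'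
  have hμ0 : μ ≠ 0 := hμ.ne'
  have hα0 : α ≠ 0 := hα.ne'
  set c : ℝ := 1 / (k:ℝ) with hc_def
  have hc : 0 < c := by positivity
  set φ : ℝ → ℝ := fun τ => Real.exp (-((μ * ((k:ℝ) * τ - 1)) ^ α)) with hφ_def
  set F' : ℝ → ℝ := fun τ =>
    Real.exp (-((μ * ((k:ℝ) * τ - 1)) ^ α)) *
      -(α * (μ * ((k:ℝ) * τ - 1)) ^ (α - 1) * (μ * (k:ℝ))) with hF'_def
  set ψ : ℝ → ℝ := fun ε => 1 / (k:ℝ) + (-Real.log ε) ^ (1/α) / (μ * (k:ℝ)) with hψ_def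
  -- basic positivity on Ioi c
  have hu_pos : ∀ τ ∈ Set.Ioi c, 0 < μ * ((k:ℝ) * τ - 1) := by
    intro τ hτ
    have : 1 < (k:ℝ) * τ := by
      rw [Set.mem_Ioi, hc_def, div_lt_iff₀ hk0] at hτ
      linarith [hτ]
    have h' : 0 < (k:ℝ) * τ - 1 := by linarith
    positivity
  -- derivative of φ
  have hderiv : ∀ τ ∈ Set.Ioi c, HasDerivWithinAt φ (F' τ) (Set.Ioi c) τ := by
    intro τ hτ
    have hu := hu_pos τ hτ
    have hlin : HasDerivAt (fun x : ℝ => μ * ((k:ℝ) * x - 1)) (μ * (k:ℝ)) τ := by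
      simpa using (((hasDerivAt_id τ).const_mul (k:ℝ)).sub_const (1:ℝ)).const_mul μ
    have hrpow : HasDerivAt (fun y : ℝ => y ^ α)
        (α * (μ * ((k:ℝ) * τ - 1)) ^ (α - 1)) (μ * ((k:ℝ) * τ - 1)) :=
      Real.hasDerivAt_rpow_const (Or.inl hu.ne')
    have hcomp := (hrpow.comp τ hlin).neg.exp
    refine HasDerivAt.hasDerivWithinAt ?_
    exact hcomp
  -- φ is injective on Ioi c via the left inverse ψ
  have hleft : ∀ τ ∈ Set.Ioi c, ψ (φ τ) = τ := by
    intro τ hτ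
    have hu := hu_pos τ hτ
    have hlog : Real.log (φ τ) = -((μ * ((k:ℝ) * τ - 1)) ^ α) := Real.log_exp _
    have : (-Real.log (φ τ)) ^ (1/α) = μ * ((k:ℝ) * τ - 1) := by
      rw [hlog, neg_neg, ← Real.rpow_mul hu.le, mul_one_div, div_self hα0, Real.rpow_one]
    simp only [hψ_def, this]
    field_simp
    ring
  have hinj : Set.InjOn φ (Set.Ioi c) := by
    intro a ha b hb hab
    have := congrArg ψ hab
    rwa [hleft a ha, hleft b hb] at this
  -- image of Ioi c under φ is Ioo 0 1
  have himg : φ '' (Set.Ioi c) = Set.Ioo (0:ℝ) 1 := by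
    apply Set.Subset.antisymm
    · rintro x ⟨τ, hτ, rfl⟩
      have hu := hu_pos τ hτ
      have hpow : 0 < (μ * ((k:ℝ) * τ - 1)) ^ α := Real.rpow_pos_of_pos hu _
      exact ⟨Real.exp_pos _, Real.exp_lt_one_iff.mpr (by linarith)⟩
    · rintro ε ⟨hε0, hε1⟩
      have hlogneg : Real.log ε < 0 := Real.log_neg hε0 hε1
      have hL : 0 < -Real.log ε := by linarith
      have hLpow : 0 < (-Real.log ε) ^ (1/α) := Real.rpow_pos_of_pos hL _
      refine ⟨ψ ε, ?_, ?_⟩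
      · have : 0 < (-Real.log ε) ^ (1/α) / (μ * (k:ℝ)) := by positivity
        simp only [hψ_def, Set.mem_Ioi, hc_def]
        linarith
      · have hu : μ * ((k:ℝ) * ψ ε - 1) = (-Real.log ε) ^ (1/α) := by
          simp only [hψ_def]
          field_simp
          ring
        have : (μ * ((k:ℝ) * ψ ε - 1)) ^ α = -Real.log ε := by
          rw [hu, ← Real.rpow_mul hL.le, one_div, inv_mul_cancel₀ hα0, Real.rpow_one]
        simp only [hφ_def, this, neg_neg, Real.exp_log hε0]
  -- change of variables
  have hcov :
      ∫⁻ ε in Set.Ioo (0:ℝ) 1,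
          ENNReal.ofReal (g ε / (ε * Real.log (1 / ε) ^ ((1:ℝ) - 1 / α)))
        = ∫⁻ τ in Set.Ioi c,
            ENNReal.ofReal |F' τ| *
              ENNReal.ofReal (g (φ τ) / (φ τ * Real.log (1 / φ τ) ^ ((1:ℝ) - 1 / α))) := by
    rw [← himg]
    have := lintegral_image_eq_lintegral_abs_det_fderiv_mul (volume : Measure ℝ)
      measurableSet_Ioi
      (fun x hx => (hderiv x hx).hasFDerivWithinAt) hinj
      (fun ε => ENNReal.ofReal (g ε / (ε * Real.log (1 / ε) ^ ((1:ℝ) - 1 / α))))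
    simpa [ContinuousLinearMap.det_toSpanSingleton] using this
  -- pointwise simplification on Ioi c
  have hpt : ∀ τ ∈ Set.Ioi c,
      ENNReal.ofReal |F' τ| *
          ENNReal.ofReal (g (φ τ) / (φ τ * Real.log (1 / φ τ) ^ ((1:ℝ) - 1 / α)))
        = ENNReal.ofReal (μ * k * α) * ENNReal.ofReal (g (φ τ)) := by
    intro τ hτ
    have hu := hu_pos τ hτ
    set u : ℝ := μ * ((k:ℝ) * τ - 1) with hu_def
    have hφpos : 0 < φ τ := Real.exp_pos _
    have hupow : 0 < u ^ (α - 1) := Real.rpow_pos_of_pos hu _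
    have hlog : Real.log (1 / φ τ) = u ^ α := by
      rw [one_div, Real.log_inv, hφ_def]
      simp [Real.log_exp]
      rfl
    have hpowpow : (u ^ α) ^ ((1:ℝ) - 1 / α) = u ^ (α - 1) := by
      rw [← Real.rpow_mul hu.le]
      congr 1
      field_simp
    have habs : |F' τ| = φ τ * (α * u ^ (α - 1) * (μ * (k:ℝ))) := by
      rw [hF'_def]
      simp only [← hu_def, ← hφ_def]
      rw [abs_mul, abs_neg, abs_of_pos hφpos, abs_of_pos (by positivity)]
    rw [habs, hlog, hpowpow, ← ENNReal.ofReal_mul (by positivity),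
      ← ENNReal.ofReal_mul (by positivity)]
    congr 1
    field_simp
  -- the ε-integral equals (μkα) times the τ-integral
  have hεint :
      ∫⁻ ε in Set.Ioo (0:ℝ) 1,
          ENNReal.ofReal (g ε / (ε * Real.log (1 / ε) ^ ((1:ℝ) - 1 / α)))
        = ENNReal.ofReal (μ * k * α) *
            ∫⁻ τ in Set.Ioi c, ENNReal.ofReal (g (φ τ)) := by
    rw [hcov, setLIntegral_congr_fun measurableSet_Ioi
      hpt, lintegral_const_mul' _ _ ENNReal.ofReal_ne_top]
  -- layer cake
  have hlayer : ∫⁻ ω, ENNReal.ofReal (T ω) ∂ℙ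
      = ∫⁻ t in Set.Ioi (0:ℝ), ℙ {a : Ω | t < T a} :=
    lintegral_eq_lintegral_meas_lt ℙ (Filter.Eventually.of_forall hTnn) hT.aemeasurable
  -- split the τ integral
  have hsplit : ∫⁻ t in Set.Ioi (0:ℝ), ℙ {a : Ω | t < T a}
      = ENNReal.ofReal c + ∫⁻ τ in Set.Ioi c, ENNReal.ofReal (g (φ τ)) := by
    rw [← Set.Ioo_union_Ici_eq_Ioi hc, lintegral_union measurableSet_Ici
      (Set.disjoint_left.mpr fun x hx hx' => absurd hx' (not_le.mpr hx.2))]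
    congr 1
    · rw [setLIntegral_congr_fun measurableSet_Ioo
        (fun t ht => h1 t ht.1.le ht.2)]
      simp [Real.volume_Ioo]
    · rw [← MeasureTheory.restrict_Ioi_eq_restrict_Ici]
      exact setLIntegral_congr_fun measurableSet_Ioi
        (fun t ht => h2 t (le_of_lt ht))
  rw [hlayer, hsplit, hεint, ← mul_assoc,
    ← ENNReal.ofReal_mul (by positivity), one_div,
    inv_mul_cancel₀ (by positivity), ENNReal.ofReal_one, one_mul]
end
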